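/- The species of labelled rooted trees with NAP partial compositions forms a symmetric operad: the partial compositions ∘_s satisfy parallel associativity, nested associativity, naturality with respect to bijective relabellings, and unitality with respect to single-vertex trees. -/
import Mathlib


/-- A labelled rooted tree with vertex set `supp` inside an ambient label type `V`,
given by its root and its parent function (normalized to the identity outside
`supp`, and fixing the root). -/
structure LTree (V : Type) where
  supp : Finset V
  root : V
  parent : V → V

namespace LTree

variable {V : Type} [DecidableEq V]

/-- `t` is an honest rooted tree on its vertex set `t.supp`:  the root is a vertex,
the parent map fixes the root, sends vertices to vertices, every vertex reaches the
root by iterating the parent map (connectedness/acyclicity), and the parent map is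
normalized to the identity outside the vertex set. -/
def IsTree (t : LTree V) : Prop :=
  t.root ∈ t.supp ∧ t.parent t.root = t.root ∧
    (∀ v ∈ t.supp, t.parent v ∈ t.supp ∧ ∃ n, t.parent^[n] v = t.root) ∧
    (∀ v, v ∉ t.supp → t.parent v = v)

/-- The NAP partial composition `u ∘ₛ v`: replace the vertex `s` of `u` by the tree
`v`, reconnecting each edge of `u` arriving at `s` to the root of `v`. -/
def ncomp (u : LTree V) (s : V) (v : LTree V) : LTree V where
  supp := u.supp.erase s ∪ v.supp
  root := if u.root = s then v.root else u.root
  parent x :=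
    if x ∈ u.supp.erase s then (if u.parent x = s then v.root else u.parent x)
    else if x ∈ v.supp then
      (if x = v.root then (if u.parent s = s then v.root else u.parent s) else v.parent x)
    else x

/-- Relabelling a tree along a bijection of the ambient label type. -/
def relabel (e : V ≃ V) (t : LTree V) : LTree V where
  supp := t.supp.image e
  root := e t.root
  parent x := e (t.parent (e.symm x))

/-- The single-vertex tree on the vertex `a`. -/
def eta (a : V) : LTree V := ⟨{a}, a, fun x => x⟩

/-- The edges of `u` arriving at `s`, identified with the children of `s`. -/
def children (u : LTree V) (s : V) : Finset V :=
  (u.supp.erase s).filter (fun w => u.parent w = s)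

/-- The tree `u ∘ₛᶠ v` for `f : In(s,u) → Ver(v)`: replace the vertex `s` of `u` by
the tree `v`, reconnecting each edge `a ∈ In(s,u)` to the vertex `f a` of `v`. -/
def fcomp (u : LTree V) (s : V) (v : LTree V) (f : V → V) : LTree V where
  supp := u.supp.erase s ∪ v.supp
  root := if u.root = s then v.root else u.root
  parent x :=
    if x ∈ u.supp.erase s then (if u.parent x = s then f x else u.parent x)
    else if x ∈ v.supp then
      (if x = v.root then (if u.parent s = s then v.root else u.parent s) else v.parent x)
    else x

/-- The Pre-Lie partial composition `u ∘ₛ v := Σ_{f : In(s,u) → Ver(v)} u ∘ₛᶠ v`,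
a formal linear combination of rooted trees. -/
noncomputable def plcomp (u : LTree V) (s : V) (v : LTree V) : LTree V →₀ ℚ :=
  ∑ f : {w // w ∈ children u s} → {x // x ∈ v.supp},
    Finsupp.single
      (fcomp u s v (fun w => if h : w ∈ children u s then (f ⟨w, h⟩ : V) else v.root)) 1

/-- Bilinear extension of the Pre-Lie partial composition to formal sums. -/
noncomputable def plext (x : LTree V →₀ ℚ) (s : V) (y : LTree V →₀ ℚ) : LTree V →₀ ℚ :=
  x.sum fun t a => y.sum fun u b => (a * b) • plcomp t s u

end LTree


namespace LTree
variable {V : Type} [DecidableEq V]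

set_option linter.unusedSectionVars false
set_option linter.unusedVariables false

theorem ext' {t u : LTree V} (h1 : t.supp = u.supp) (h2 : t.root = u.root)
    (h3 : t.parent = u.parent) : t = u := by
  cases t; cases u; simp_all

theorem A1 (x y z : LTree V) (hx : x.IsTree) (hy : y.IsTree) (hz : z.IsTree)
    (dxy : Disjoint x.supp y.supp) (dxz : Disjoint x.supp z.supp)
    (dyz : Disjoint y.supp z.supp) (s s' : V) (hs : s ∈ x.supp) (hs' : s' ∈ x.supp)
    (hne : s ≠ s') : ncomp (ncomp x s y) s' z = ncomp (ncomp x s' z) s y := by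
  rw [Finset.disjoint_left] at dxy dxz dyz
  obtain ⟨hxr, hxpr, hxp, hxo⟩ := hx
  obtain ⟨hyr, hypr, hyp, hyo⟩ := hy
  obtain ⟨hzr, hzpr, hzp, hzo⟩ := hz
  have hsy : s ∉ y.supp := dxy hs
  have hsz : s ∉ z.supp := dxz hs
  have hs'y : s' ∉ y.supp := dxy hs'
  have hs'z : s' ∉ z.supp := dxz hs'
  have hyrx : y.root ∉ x.supp := fun h => dxy h hyr
  have hzrx : z.root ∉ x.supp := fun h => dxz h hzr
  have hzry : z.root ∉ y.supp := fun h => dyz h hzr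
  have hyrz : y.root ∉ z.supp := dyz hyr
  refine ext' ?_ ?_ ?_
  · ext w
    simp only [ncomp, Finset.mem_union, Finset.mem_erase]
    constructor
    · rintro (⟨h1, (⟨h2, h3⟩ | h3)⟩ | h3)
      · exact Or.inl ⟨h2, Or.inl ⟨h1, h3⟩⟩
      · exact Or.inr h3
      · exact Or.inl ⟨fun h => hsz (h ▸ h3), Or.inr h3⟩
    · rintro (⟨h1, (⟨h2, h3⟩ | h3)⟩ | h3)
      · exact Or.inl ⟨h2, Or.inl ⟨h1, h3⟩⟩
      · exact Or.inr h3
      · exact Or.inl ⟨fun h => hs'y (h ▸ h3), Or.inr h3⟩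
  · simp only [ncomp]
    by_cases h1 : x.root = s
    · have : y.root ≠ s' := fun h => hs'y (h ▸ hyr)
      simp [h1, hne.symm, this, hne]
    · by_cases h2 : x.root = s'
      · have : z.root ≠ s := fun h => hsz (h ▸ hzr)
        simp [h1, h2, this, hne, hne.symm]
      · simp [h1, h2]
  · funext w
    simp only [ncomp, Finset.mem_union, Finset.mem_erase]
    by_cases hwx : w ∈ x.supp
    · have hwy : w ∉ y.supp := dxy hwx
      have hwz : w ∉ z.supp := dxz hwx
      by_cases hws : w = s
      · subst hws; simp [hwy, hwz, hne]
      · by_cases hws' : w = s'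
        · subst hws'; simp [hwy, hwz, hne.symm]
        · have hpwx : x.parent w ∈ x.supp := (hxp w hwx).1
          have h1 : y.root ≠ s' := fun h => hs'y (h ▸ hyr)
          have h2 : z.root ≠ s := fun h => hsz (h ▸ hzr)
          by_cases hp1 : x.parent w = s <;> by_cases hp2 : x.parent w = s' <;>
            simp_all
    · by_cases hwy : w ∈ y.supp
      · have hwz : w ∉ z.supp := dyz hwy
        have hws : w ≠ s := fun h => hwx (h ▸ hs)
        have hws' : w ≠ s' := fun h => hwx (h ▸ hs')
        have hpsx : x.parent s ∈ x.supp := (hxp s hs).1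
        have h2 : z.root ≠ s := fun h => hsz (h ▸ hzr)
        by_cases hwr : w = y.root
        · subst hwr
          have hq1 : x.parent s ≠ z.root := fun h => hzrx (h ▸ hpsx)
          have hq2 : x.parent s ≠ y.root := fun h => hyrx (h ▸ hpsx)
          have h1 : y.root ≠ s' := fun h => hs'y (h ▸ hyr)
          by_cases hp1 : x.parent s = s <;> by_cases hp2 : x.parent s = s' <;>
            [exact absurd (hp1.symm.trans hp2) hne;
             simp [hwx, hwy, hwz, hws, hws', hp1, hp2, h1, h2, hne, hne.symm, hq1, hq2, hs, hs'];
             simp [hwx, hwy, hwz, hws, hws', hp1, hp2, h1, h2, hne, hne.symm, hq1, hq2, hs, hs'];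
             simp [hwx, hwy, hwz, hws, hws', hp1, hp2, h1, h2, hne, hne.symm, hq1, hq2, hs, hs']]
        · have hpwy : y.parent w ∈ y.supp := (hyp w hwy).1
          have hq1 : y.parent w ≠ s := fun h => hsy (h ▸ hpwy)
          have hq2 : y.parent w ≠ s' := fun h => hs'y (h ▸ hpwy)
          simp [hwx, hwy, hwz, hws, hws', hwr, hq1, hq2]
      · by_cases hwz : w ∈ z.supp
        · have hws : w ≠ s := fun h => hwx (h ▸ hs)
          have hws' : w ≠ s' := fun h => hwx (h ▸ hs')
          have hps'x : x.parent s' ∈ x.supp := (hxp s' hs').1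
          have h1 : y.root ≠ s' := fun h => hs'y (h ▸ hyr)
          have h2 : z.root ≠ s := fun h => hsz (h ▸ hzr)
          by_cases hwr : w = z.root
          · subst hwr
            have hq1 : x.parent s' ≠ z.root := fun h => hzrx (h ▸ hps'x)
            have hq2 : x.parent s' ≠ y.root := fun h => hyrx (h ▸ hps'x)
            by_cases hp1 : x.parent s' = s <;> by_cases hp2 : x.parent s' = s' <;>
              [exact absurd (hp2.symm.trans hp1).symm hne;
               simp [hwx, hwy, hwz, hws, hws', hp1, hp2, h1, h2, hne, hne.symm, hq1, hq2, hs, hs'];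
               simp [hwx, hwy, hwz, hws, hws', hp1, hp2, h1, h2, hne, hne.symm, hq1, hq2, hs, hs'];
               simp [hwx, hwy, hwz, hws, hws', hp1, hp2, h1, h2, hne, hne.symm, hq1, hq2, hs, hs']]
          · have hpwz : z.parent w ∈ z.supp := (hzp w hwz).1
            have hq1 : z.parent w ≠ s := fun h => hsz (h ▸ hpwz)
            have hq2 : z.parent w ≠ s' := fun h => hs'z (h ▸ hpwz)
            simp [hwx, hwy, hwz, hws, hws', hwr, hq1, hq2]
        · simp [hwx, hwy, hwz]

theorem A2 (x y z : LTree V) (hx : x.IsTree) (hy : y.IsTree) (hz : z.IsTree)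
    (dxy : Disjoint x.supp y.supp) (dxz : Disjoint x.supp z.supp)
    (dyz : Disjoint y.supp z.supp) (s t : V) (hs : s ∈ x.supp) (ht : t ∈ y.supp) :
    ncomp (ncomp x s y) t z = ncomp x s (ncomp y t z) := by
  rw [Finset.disjoint_left] at dxy dxz dyz
  obtain ⟨hxr, hxpr, hxp, hxo⟩ := hx
  obtain ⟨hyr, hypr, hyp, hyo⟩ := hy
  obtain ⟨hzr, hzpr, hzp, hzo⟩ := hz
  have hsy : s ∉ y.supp := dxy hs
  have hsz : s ∉ z.supp := dxz hs
  have htx : t ∉ x.supp := fun h => dxy h ht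
  have htz : t ∉ z.supp := dyz ht
  have hst : s ≠ t := fun h => htx (h ▸ hs)
  have hyrx : y.root ∉ x.supp := fun h => dxy h hyr
  have hzrx : z.root ∉ x.supp := fun h => dxz h hzr
  have hzry : z.root ∉ y.supp := fun h => dyz h hzr
  have hyrz : y.root ∉ z.supp := dyz hyr
  have hzrt : z.root ≠ t := fun h => htz (h ▸ hzr)
  have hzyr : z.root ≠ y.root := fun h => (dyz hyr) (h ▸ hzr)
  refine ext' ?_ ?_ ?_
  · ext w
    simp only [ncomp, Finset.mem_union, Finset.mem_erase]
    constructor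
    · rintro (⟨h1, (⟨h2, h3⟩ | h3)⟩ | h3)
      · exact Or.inl ⟨h2, h3⟩
      · exact Or.inr (Or.inl ⟨h1, h3⟩)
      · exact Or.inr (Or.inr h3)
    · rintro (⟨h1, h2⟩ | (⟨h1, h2⟩ | h2))
      · exact Or.inl ⟨fun h => htx (h ▸ h2), Or.inl ⟨h1, h2⟩⟩
      · exact Or.inl ⟨h1, Or.inr h2⟩
      · exact Or.inr h2
  · simp only [ncomp]
    by_cases h1 : x.root = s
    · simp [h1]
    · have : x.root ≠ t := fun h => htx (h ▸ hxr)
      simp [h1, this]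
  · funext w
    simp only [ncomp, Finset.mem_union, Finset.mem_erase]
    by_cases hwx : w ∈ x.supp
    · have hwy : w ∉ y.supp := dxy hwx
      have hwz : w ∉ z.supp := dxz hwx
      have hwt : w ≠ t := fun h => htx (h ▸ hwx)
      by_cases hws : w = s
      · subst hws; simp [hwy, hwz, hwt]
      · have hpwx : x.parent w ∈ x.supp := (hxp w hwx).1
        have hpwt : x.parent w ≠ t := fun h => htx (h ▸ hpwx)
        by_cases hp1 : x.parent w = s <;>
          simp [hwx, hwy, hwz, hwt, hws, hp1, hpwt, hzrt]
    · by_cases hwy : w ∈ y.supp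
      · have hwz : w ∉ z.supp := dyz hwy
        have hws : w ≠ s := fun h => hwx (h ▸ hs)
        have hpsx : x.parent s ∈ x.supp := (hxp s hs).1
        have hpst : x.parent s ≠ t := fun h => htx (h ▸ hpsx)
        by_cases hwt : w = t
        · subst hwt; simp [hwx, hwy, hwz, hws]
        · by_cases hwr : w = y.root
          · subst hwr
            have hyt : y.root ≠ t := hwt
            by_cases hp1 : x.parent s = s <;>
              simp [hwx, hwy, hwz, hws, hwt, hp1, hpst, hyt, hs]
          · have hpwy : y.parent w ∈ y.supp := (hyp w hwy).1
            have hq1 : y.parent w ≠ s := fun h => hsy (h ▸ hpwy)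
            have hq2 : w ≠ z.root := fun h => hwz (h ▸ hzr)
            by_cases hyt : y.root = t <;>
              simp [hwx, hwy, hwz, hws, hwt, hwr, hq1, hq2, hyt, hzyr, hs, ht, hst, hst.symm, htx, hsy, hsz, htz, hyrx, hzrx, hzry, hyrz, hzrt, hyr, hzr]
      · by_cases hwz : w ∈ z.supp
        · have hws : w ≠ s := fun h => hwx (h ▸ hs)
          have hwt : w ≠ t := fun h => hwy (h ▸ ht)
          have hpsx : x.parent s ∈ x.supp := (hxp s hs).1
          have hpst : x.parent s ≠ t := fun h => htx (h ▸ hpsx)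
          have hpty : y.parent t ∈ y.supp := (hyp t ht).1
          have hpts : y.parent t ≠ s := fun h => hsy (h ▸ hpty)
          by_cases hwr : w = z.root
          · subst hwr
            by_cases hyt : y.root = t
            · subst hyt
              by_cases hp1 : x.parent s = s <;>
                simp [hwx, hwy, hwz, hws, hwt, hp1, hpst, hzyr, hs, ht, hst, hst.symm, htx, hsy, hsz, htz, hyrx, hzrx, hzry, hyrz, hzrt, hyr, hzr]
            · by_cases hp2 : y.parent t = t <;>
                simp [hwx, hwy, hwz, hws, hwt, hp2, hpts, hyt, Ne.symm hyt, hzyr, hs, ht, hst, hst.symm, htx, hsy, hsz, htz, hyrx, hzrx, hzry, hyrz, hzrt, hyr, hzr]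
          · have hpwz : z.parent w ∈ z.supp := (hzp w hwz).1
            have hq1 : z.parent w ≠ t := fun h => htz (h ▸ hpwz)
            have hq2 : w ≠ y.root := fun h => hwy (h ▸ hyr)
            by_cases hyt : y.root = t <;>
              simp [hwx, hwy, hwz, hws, hwt, hwr, hq1, hq2, hyt, hzyr, hs, ht, hst, hst.symm, htx, hsy, hsz, htz, hyrx, hzrx, hzry, hyrz, hzrt, hyr, hzr]
        · have h1 : ¬(w ≠ t ∧ w ∈ y.supp) := fun h => hwy h.2
          simp [hwx, hwy, hwz]

theorem N1 (x y : LTree V) (s : V) (e : V ≃ V) :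
    relabel e (ncomp x s y) = ncomp (relabel e x) (e s) (relabel e y) := by
  refine ext' ?_ ?_ ?_
  · ext w
    simp only [relabel, ncomp, Finset.mem_image, Finset.mem_union, Finset.mem_erase,
      EmbeddingLike.apply_eq_iff_eq]
    constructor
    · rintro ⟨a, (⟨has, ha⟩ | ha), rfl⟩
      · exact Or.inl ⟨by simpa using has, ⟨a, ha, rfl⟩⟩
      · exact Or.inr ⟨a, ha, rfl⟩
    · rintro (⟨hne, a, ha, rfl⟩ | ⟨a, ha, rfl⟩)
      · exact ⟨a, Or.inl ⟨by simpa using hne, ha⟩, rfl⟩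
      · exact ⟨a, Or.inr ha, rfl⟩
  · simp only [relabel, ncomp, EmbeddingLike.apply_eq_iff_eq]
    split_ifs <;> rfl
  · funext w
    obtain ⟨w, rfl⟩ : ∃ w', w = e w' := ⟨e.symm w, (e.apply_symm_apply w).symm⟩
    simp only [relabel, ncomp, Finset.mem_erase, Finset.mem_image, Finset.mem_union,
      EmbeddingLike.apply_eq_iff_eq, Equiv.symm_apply_apply, exists_eq_right]
    by_cases h1 : w ∈ x.supp.erase s
    · have h1' : w ∈ x.supp ∧ w ≠ s := by simpa [Finset.mem_erase, and_comm] using h1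
      simp [h1, h1'.1, h1'.2, EmbeddingLike.apply_eq_iff_eq]
      split_ifs <;> simp_all
    · have h1' : ¬(w ≠ s ∧ w ∈ x.supp) := by simpa [Finset.mem_erase] using h1
      simp only [h1, if_false, h1']
      simp only [Finset.mem_erase] at h1
      by_cases h2 : w ∈ y.supp
      · simp [h2, EmbeddingLike.apply_eq_iff_eq]
        split_ifs <;> simp_all
      · simp [h2, h1']

theorem N2 (a : V) (e : V ≃ V) : relabel e (eta a) = eta (e a) := by
  refine ext' ?_ rfl ?_
  · simp [relabel, eta]
  · funext w; simp [relabel, eta]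

theorem U1 (a : V) (y : LTree V) (hy : y.IsTree) (ha : a ∉ y.supp) :
    ncomp (eta a) a y = y := by
  obtain ⟨h1, h2, h3, h4⟩ := hy
  refine ext' ?_ (by simp [ncomp, eta]) ?_
  · simp [ncomp, eta]
  · funext w
    simp only [ncomp, eta, Finset.erase_singleton, Finset.notMem_empty, if_false]
    by_cases hw : w ∈ y.supp
    · by_cases hr : w = y.root
      · simp [hw, hr, h2]
      · simp [hw, hr]
    · simp [hw, h4 w hw]

theorem U2 (x : LTree V) (s : V) (hx : x.IsTree) (hs : s ∈ x.supp) :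
    ncomp x s (eta s) = x := by
  obtain ⟨h1, h2, h3, h4⟩ := hx
  refine ext' ?_ ?_ ?_
  · ext w
    simp only [ncomp, eta, Finset.mem_union, Finset.mem_erase, Finset.mem_singleton]
    constructor
    · rintro (⟨_, h⟩ | rfl); exact h; exact hs
    · intro h; by_cases hws : w = s
      · exact Or.inr hws
      · exact Or.inl ⟨hws, h⟩
  · simp only [ncomp, eta]; split_ifs with h <;> simp [h]
  · funext w
    simp only [ncomp, eta, Finset.mem_erase, Finset.mem_singleton]
    by_cases hw : w ∈ x.supp
    · by_cases hws : w = s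
      · subst hws; simp
        exact fun h => h.symm
      · have hpw := (h3 w hw).1
        simp only [hws, hw, and_true, not_false_iff, if_true]
        by_cases hps : x.parent w = s
        · simp [hps, hws]
        · simp [hps, hws]
    · have heq := h4 w hw
      have hws : w ≠ s := fun h => hw (h ▸ hs)
      simp [hw, hws, heq]

end LTree

open LTree in
/-- The species of labelled rooted trees with NAP partial compositions is a symmetric
operad: parallel associativity (A1), nested associativity (A2), naturality under
bijective relabellings (N1) and (N2), and unitality (U1), (U2) with the one-vertex
trees as units. -/
theorem nap_is_operad {V : Type} [DecidableEq V] :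
    -- (A1) parallel associativity
    (∀ (x y z : LTree V), x.IsTree → y.IsTree → z.IsTree →
      Disjoint x.supp y.supp → Disjoint x.supp z.supp → Disjoint y.supp z.supp →
      ∀ s s' : V, s ∈ x.supp → s' ∈ x.supp → s ≠ s' →
        ncomp (ncomp x s y) s' z = ncomp (ncomp x s' z) s y) ∧
    -- (A2) nested associativity
    (∀ (x y z : LTree V), x.IsTree → y.IsTree → z.IsTree →
      Disjoint x.supp y.supp → Disjoint x.supp z.supp → Disjoint y.supp z.supp →
      ∀ s t : V, s ∈ x.supp → t ∈ y.supp →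
        ncomp (ncomp x s y) t z = ncomp x s (ncomp y t z)) ∧
    -- (N1) naturality of the partial compositions under relabelling
    (∀ (x y : LTree V), x.IsTree → y.IsTree → Disjoint x.supp y.supp →
      ∀ s : V, s ∈ x.supp → ∀ e : V ≃ V,
        relabel e (ncomp x s y) = ncomp (relabel e x) (e s) (relabel e y)) ∧
    -- (N2) naturality of the units
    (∀ (a : V) (e : V ≃ V), relabel e (eta a) = eta (e a)) ∧
    -- (U1) left unitality
    (∀ (a : V) (y : LTree V), y.IsTree → a ∉ y.supp → ncomp (eta a) a y = y) ∧
    -- (U2) right unitality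
    (∀ (x : LTree V) (s : V), x.IsTree → s ∈ x.supp → ncomp x s (eta s) = x) := by
  refine ⟨fun x y z hx hy hz d1 d2 d3 s s' hs hs' hne => A1 x y z hx hy hz d1 d2 d3 s s' hs hs' hne,
    fun x y z hx hy hz d1 d2 d3 s t hs ht => A2 x y z hx hy hz d1 d2 d3 s t hs ht,
    fun x y _ _ _ s _ e => N1 x y s e,
    fun a e => N2 a e,
    fun a y hy ha => U1 a y hy ha,
    fun x s hx hs => U2 x s hx hs⟩
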